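/- Let A be a primitive PC(-1)-axial algebra over a field F of characteristic different from 2 and 3. Then A is a pseudo-composition algebra: there exists a nonzero symmetric bilinear form φ : A × A → F such that (x·x)·x = φ(x,x)·x for all x ∈ A. -/
import Mathlib
set_option linter.unusedSectionVars false
set_option maxHeartbeats 1000000


open Submodule

variable {F : Type*} [Field F] {A : Type*} [NonUnitalNonAssocCommRing A]
  [Module F A] [SMulCommClass F A A] [IsScalarTower F A A]

variable (F) in
/-- The `lam`-eigenspace of the adjoint map of `a`. -/
def PCeig (a : A) (lam : F) : Submodule F A where
  carrier := {x : A | a * x = lam • x}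
  add_mem' := by
    intro x y hx hy
    simp only [Set.mem_setOf_eq] at hx hy ⊢
    rw [mul_add, hx, hy, smul_add]
  zero_mem' := by simp
  smul_mem' := by
    intro c x hx
    simp only [Set.mem_setOf_eq] at hx ⊢
    rw [mul_smul_comm, hx, smul_smul, smul_smul, mul_comm]

variable (F) in
/-- The fusion law `PC(η)` for an idempotent (axis) `a`. -/
structure IsPCAxis (η : F) (a : A) : Prop where
  idem : a * a = a
  decomp : PCeig F a 1 ⊔ PCeig F a η ⊔ PCeig F a (1/2 : F) = ⊤
  fus11 : ∀ x ∈ PCeig F a 1, ∀ y ∈ PCeig F a 1, x * y ∈ PCeig F a 1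
  fus1e : ∀ x ∈ PCeig F a 1, ∀ y ∈ PCeig F a η, x * y ∈ PCeig F a η
  fus1h : ∀ x ∈ PCeig F a 1, ∀ y ∈ PCeig F a (1/2 : F), x * y ∈ PCeig F a (1/2 : F)
  fusee : ∀ x ∈ PCeig F a η, ∀ y ∈ PCeig F a η, x * y ∈ PCeig F a 1
  fuseh : ∀ x ∈ PCeig F a η, ∀ y ∈ PCeig F a (1/2 : F), x * y ∈ PCeig F a (1/2 : F)
  fushh : ∀ x ∈ PCeig F a (1/2 : F), ∀ y ∈ PCeig F a (1/2 : F),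
    x * y ∈ PCeig F a 1 ⊔ PCeig F a η

variable (F) in
/-- A primitive axis: an axis with `A_1(a) = F·a` (one-dimensional). -/
def IsPrimPCAxis (η : F) (a : A) : Prop :=
  IsPCAxis F η a ∧ a ≠ 0 ∧ PCeig F a 1 = Submodule.span F {a}

variable (F A) in
/-- A `PC(η)`-axial algebra: generated, as a non-unital algebra, by a (nonempty) set of axes. -/
def IsPCAxialAlgebra (η : F) : Prop :=
  ∃ X : Set A, X.Nonempty ∧ (∀ a ∈ X, IsPCAxis F η a) ∧
    NonUnitalAlgebra.adjoin F X = ⊤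

variable (F A) in
/-- A primitive `PC(η)`-axial algebra: generated by a (nonempty) set of primitive axes. -/
def IsPrimPCAxialAlgebra (η : F) : Prop :=
  ∃ X : Set A, X.Nonempty ∧ (∀ a ∈ X, IsPrimPCAxis F η a) ∧
    NonUnitalAlgebra.adjoin F X = ⊤

lemma mem_PCeig {a x : A} {μ : F} : x ∈ PCeig F a μ ↔ a * x = μ • x := Iff.rfl

/-- Decomposition data for `y` along the eigenspaces of `c`. -/
def DecProp (c y : A) (z : F × A × A) : Prop :=
  z.2.1 ∈ PCeig F c (-1 : F) ∧ z.2.2 ∈ PCeig F c (1/2 : F) ∧ y = z.1 • c + z.2.1 + z.2.2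

variable (F) in
noncomputable def dec (c y : A) : F × A × A :=
  letI := Classical.propDecidable (∃ z : F × A × A, DecProp c y z)
  if h : ∃ z : F × A × A, DecProp c y z then h.choose else 0

variable (F) in
noncomputable def lam (c y : A) : F := (dec F c y).1

variable (F) in
noncomputable def sig (c y : A) : A := (dec F c y).2.1

variable (F) in
noncomputable def pii (c y : A) : A := (dec F c y).2.2

section Axis

variable {c : A} (h2 : (2:F) ≠ 0) (h3 : (3:F) ≠ 0)
  (hax : IsPCAxis F (-1 : F) c) (hc0 : c ≠ 0)
  (hspan : PCeig F c 1 = span F {c})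

include h2 h3 hax hc0 hspan

lemma dec_exists (y : A) : ∃ z : F × A × A, DecProp c y z := by
  have hy : y ∈ (⊤ : Submodule F A) := trivial
  rw [← hax.decomp] at hy
  obtain ⟨e, he, p, hp, hy'⟩ := mem_sup.mp hy
  obtain ⟨e1, he1, u, hu, he'⟩ := mem_sup.mp he
  rw [hspan] at he1
  obtain ⟨t, ht⟩ := mem_span_singleton.mp he1
  exact ⟨(t, u, p), hu, hp, by rw [← hy', ← he', ht]⟩

lemma comp_zero {t : F} {u p : A} (hu : u ∈ PCeig F c (-1:F)) (hp : p ∈ PCeig F c (1/2:F))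
    (h : t • c + u + p = 0) : t = 0 ∧ u = 0 ∧ p = 0 := by
  have h4 : (4:F) ≠ 0 := by
    have := mul_ne_zero h2 h2; norm_num at this ⊢; exact this
  have hcu : c * u = (-1:F) • u := hu
  have hcp : c * p = (1/2:F) • p := hp
  have e2 : t • c + (-1:F) • u + (1/2:F) • p = 0 := by
    calc t • c + (-1:F) • u + (1/2:F) • p
        = c * (t • c + u + p) := by
          rw [mul_add, mul_add, mul_smul_comm, hax.idem, hcu, hcp]
      _ = c * 0 := by rw [h]
      _ = 0 := mul_zero c
  have e3 : t • c + u + (1/4:F) • p = 0 := by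
    calc t • c + u + (1/4:F) • p
        = c * (t • c + (-1:F) • u + (1/2:F) • p) := by
          rw [mul_add, mul_add, mul_smul_comm, hax.idem, mul_smul_comm, hcu,
            mul_smul_comm, hcp]
          match_scalars <;> (field_simp [h2, h3, h4]; try ring)
      _ = c * 0 := by rw [e2]
      _ = 0 := mul_zero c
  have hp0 : p = 0 := by
    have key : ((3:F)/4) • p = 0 := by
      have hh : (t • c + u + p) - (t • c + u + (1/4:F) • p) = 0 - 0 := by rw [h, e3]
      rw [sub_zero] at hh
      rw [← hh]; match_scalars <;> (field_simp [h2, h3, h4]; try ring)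
    rcases smul_eq_zero.mp key with h' | h'
    · exact absurd h' (div_ne_zero h3 h4)
    · exact h'
  have hu0 : u = 0 := by
    have key : (2:F) • u = 0 := by
      have hh : (t • c + u + p) - (t • c + (-1:F) • u + (1/2:F) • p) = 0 - 0 := by rw [h, e2]
      rw [sub_zero, hp0] at hh
      rw [← hh]; match_scalars <;> (field_simp [h2, h3, h4]; try ring)
    rcases smul_eq_zero.mp key with h' | h'
    · exact absurd h' h2
    · exact h'
  have ht0 : t = 0 := by
    have hh : t • c = 0 := by
      have := h; rw [hp0, hu0, add_zero, add_zero] at this; exact this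
    rcases smul_eq_zero.mp hh with h' | h'
    · exact h'
    · exact absurd h' hc0
  exact ⟨ht0, hu0, hp0⟩

lemma dec_unique {y : A} {z z' : F × A × A} (hz : DecProp c y z) (hz' : DecProp c y z') :
    z = z' := by
  obtain ⟨hu, hp, hy⟩ := hz
  obtain ⟨hu', hp', hy'⟩ := hz'
  have h0 : (z.1 - z'.1) • c + (z.2.1 - z'.2.1) + (z.2.2 - z'.2.2) = 0 := by
    have : (z.1 • c + z.2.1 + z.2.2) - (z'.1 • c + z'.2.1 + z'.2.2) = 0 := by
      rw [← hy, ← hy', sub_self]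
    rw [← this]; module
  obtain ⟨h1, h2', h3'⟩ := comp_zero h2 h3 hax hc0 hspan (sub_mem hu hu') (sub_mem hp hp') h0
  have e1 : z.1 = z'.1 := sub_eq_zero.mp h1
  have e2 : z.2.1 = z'.2.1 := sub_eq_zero.mp h2'
  have e3 : z.2.2 = z'.2.2 := sub_eq_zero.mp h3'
  exact Prod.ext e1 (Prod.ext e2 e3)

lemma dec_spec (y : A) : DecProp c y (dec F c y) := by
  have h := dec_exists h2 h3 hax hc0 hspan y
  simp only [dec, dif_pos h]
  exact h.choose_spec

lemma dec_eq {y : A} {t : F} {u p : A} (hu : u ∈ PCeig F c (-1:F))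
    (hp : p ∈ PCeig F c (1/2:F)) (hy : y = t • c + u + p) : dec F c y = (t, u, p) :=
  dec_unique h2 h3 hax hc0 hspan (dec_spec h2 h3 hax hc0 hspan y) ⟨hu, hp, hy⟩

lemma sig_mem (y : A) : sig F c y ∈ PCeig F c (-1:F) := (dec_spec h2 h3 hax hc0 hspan y).1

lemma pii_mem (y : A) : pii F c y ∈ PCeig F c (1/2:F) := (dec_spec h2 h3 hax hc0 hspan y).2.1

lemma dec_y (y : A) : y = lam F c y • c + sig F c y + pii F c y :=
  (dec_spec h2 h3 hax hc0 hspan y).2.2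

lemma lam_eq {y : A} {t : F} {u p : A} (hu : u ∈ PCeig F c (-1:F))
    (hp : p ∈ PCeig F c (1/2:F)) (hy : y = t • c + u + p) : lam F c y = t := by
  have := dec_eq h2 h3 hax hc0 hspan hu hp hy
  rw [lam, this]

lemma sig_eq {y : A} {t : F} {u p : A} (hu : u ∈ PCeig F c (-1:F))
    (hp : p ∈ PCeig F c (1/2:F)) (hy : y = t • c + u + p) : sig F c y = u := by
  have := dec_eq h2 h3 hax hc0 hspan hu hp hy
  rw [sig, this]

lemma pii_eq {y : A} {t : F} {u p : A} (hu : u ∈ PCeig F c (-1:F))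
    (hp : p ∈ PCeig F c (1/2:F)) (hy : y = t • c + u + p) : pii F c y = p := by
  have := dec_eq h2 h3 hax hc0 hspan hu hp hy
  rw [pii, this]

lemma lam_smul_c (t : F) : lam F c (t • c) = t :=
  lam_eq h2 h3 hax hc0 hspan (zero_mem _) (zero_mem _) (by simp)

lemma lam_c : lam F c c = 1 := by
  have := lam_smul_c h2 h3 hax hc0 hspan (1 : F); simpa using this

lemma mem_E1_eq {x : A} (hx : x ∈ PCeig F c 1) : x = lam F c x • c := by
  rw [hspan] at hx
  obtain ⟨t, ht⟩ := mem_span_singleton.mp hx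
  rw [← ht, lam_smul_c h2 h3 hax hc0 hspan]

lemma lam_u {u : A} (hu : u ∈ PCeig F c (-1:F)) : lam F c u = 0 :=
  lam_eq h2 h3 hax hc0 hspan (t := 0) hu (zero_mem _) (by simp)

lemma sig_u {u : A} (hu : u ∈ PCeig F c (-1:F)) : sig F c u = u :=
  sig_eq h2 h3 hax hc0 hspan (t := 0) hu (zero_mem _) (by simp)

lemma pii_u {u : A} (hu : u ∈ PCeig F c (-1:F)) : pii F c u = 0 :=
  pii_eq h2 h3 hax hc0 hspan (t := 0) hu (zero_mem _) (by simp)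

lemma lam_p {p : A} (hp : p ∈ PCeig F c (1/2:F)) : lam F c p = 0 :=
  lam_eq h2 h3 hax hc0 hspan (t := 0) (zero_mem _) hp (by simp)

lemma sig_p {p : A} (hp : p ∈ PCeig F c (1/2:F)) : sig F c p = 0 :=
  sig_eq h2 h3 hax hc0 hspan (t := 0) (zero_mem _) hp (by simp)

lemma pii_p {p : A} (hp : p ∈ PCeig F c (1/2:F)) : pii F c p = p :=
  pii_eq h2 h3 hax hc0 hspan (t := 0) (zero_mem _) hp (by simp)

lemma dec_add (y z : A) : dec F c (y + z) = dec F c y + dec F c z := by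
  have hy := dec_y h2 h3 hax hc0 hspan y
  have hz := dec_y h2 h3 hax hc0 hspan z
  have : y + z = (lam F c y + lam F c z) • c + (sig F c y + sig F c z)
      + (pii F c y + pii F c z) := by
    rw [add_smul]
    calc y + z = (lam F c y • c + sig F c y + pii F c y)
        + (lam F c z • c + sig F c z + pii F c z) := by rw [← hy, ← hz]
      _ = _ := by abel
  exact dec_eq h2 h3 hax hc0 hspan
    (add_mem (sig_mem h2 h3 hax hc0 hspan y) (sig_mem h2 h3 hax hc0 hspan z))
    (add_mem (pii_mem h2 h3 hax hc0 hspan y) (pii_mem h2 h3 hax hc0 hspan z)) this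

lemma lam_add (y z : A) : lam F c (y + z) = lam F c y + lam F c z := by
  have := dec_add h2 h3 hax hc0 hspan y z
  rw [lam, lam, lam, this]; rfl

lemma sig_add (y z : A) : sig F c (y + z) = sig F c y + sig F c z := by
  have := dec_add h2 h3 hax hc0 hspan y z
  rw [sig, sig, sig, this]; rfl

lemma pii_add (y z : A) : pii F c (y + z) = pii F c y + pii F c z := by
  have := dec_add h2 h3 hax hc0 hspan y z
  rw [pii, pii, pii, this]; rfl

lemma dec_smul (t : F) (y : A) : dec F c (t • y) = (t * lam F c y, t • sig F c y, t • pii F c y) := by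
  have hy := dec_y h2 h3 hax hc0 hspan y
  have : t • y = (t * lam F c y) • c + t • sig F c y + t • pii F c y := by
    rw [mul_smul]
    calc t • y = t • (lam F c y • c + sig F c y + pii F c y) := by rw [← hy]
      _ = _ := by rw [smul_add, smul_add]
  exact dec_eq h2 h3 hax hc0 hspan (smul_mem _ t (sig_mem h2 h3 hax hc0 hspan y))
    (smul_mem _ t (pii_mem h2 h3 hax hc0 hspan y)) this

lemma lam_smul (t : F) (y : A) : lam F c (t • y) = t * lam F c y := by
  have := dec_smul h2 h3 hax hc0 hspan t y
  rw [lam, this]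

lemma sig_smul (t : F) (y : A) : sig F c (t • y) = t • sig F c y := by
  have := dec_smul h2 h3 hax hc0 hspan t y
  rw [sig, this]

lemma pii_smul (t : F) (y : A) : pii F c (t • y) = t • pii F c y := by
  have := dec_smul h2 h3 hax hc0 hspan t y
  rw [pii, this]

omit h2 h3 hax hc0 hspan in
lemma mul_u {u : A} (hu : u ∈ PCeig F c (-1:F)) : c * u = -u := by
  have : c * u = (-1:F) • u := hu
  rw [this, neg_one_smul]

omit h2 h3 hax hc0 hspan in
lemma mul_p {p : A} (hp : p ∈ PCeig F c (1/2:F)) : c * p = (1/2:F) • p := hp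

lemma uu_eq {u v : A} (hu : u ∈ PCeig F c (-1:F)) (hv : v ∈ PCeig F c (-1:F)) :
    u * v = lam F c (u * v) • c :=
  mem_E1_eq h2 h3 hax hc0 hspan (hax.fusee u hu v hv)

omit h2 h3 hc0 hspan in
lemma up_mem {u p : A} (hu : u ∈ PCeig F c (-1:F)) (hp : p ∈ PCeig F c (1/2:F)) :
    u * p ∈ PCeig F c (1/2:F) := hax.fuseh u hu p hp

lemma pq_dec {p q : A} (hp : p ∈ PCeig F c (1/2:F)) (hq : q ∈ PCeig F c (1/2:F)) :
    sig F c (p * q) ∈ PCeig F c (-1:F) ∧ pii F c (p * q) = 0 ∧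
      p * q = lam F c (p * q) • c + sig F c (p * q) := by
  have h := hax.fushh p hp q hq
  obtain ⟨e, he, v, hv, hpq⟩ := mem_sup.mp h
  obtain ⟨t, ht⟩ := mem_span_singleton.mp (by rw [← hspan]; exact he)
  have hdec : dec F c (p * q) = (t, v, 0) :=
    dec_eq h2 h3 hax hc0 hspan hv (zero_mem _) (by rw [← hpq, ← ht, add_zero])
  have hl : lam F c (p * q) = t := by rw [lam, hdec]
  have hs : sig F c (p * q) = v := by rw [sig, hdec]
  have hpi : pii F c (p * q) = 0 := by rw [pii, hdec]
  refine ⟨by rw [hs]; exact hv, hpi, ?_⟩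
  rw [hl, hs, ht, hpq]

lemma lam_neg (y : A) : lam F c (-y) = - lam F c y := by
  have := lam_smul h2 h3 hax hc0 hspan (-1 : F) y; simpa using this

omit h2 h3 hax hc0 hspan in
lemma u_mul_c {u : A} (hu : u ∈ PCeig F c (-1:F)) : u * c = -u := by
  rw [mul_comm]; exact mul_u hu

omit h2 h3 hax hc0 hspan in
lemma p_mul_c {p : A} (hp : p ∈ PCeig F c (1/2:F)) : p * c = (1/2:F) • p := by
  rw [mul_comm]; exact mul_p hp

lemma pq_mul_c {p q : A} (hp : p ∈ PCeig F c (1/2:F)) (hq : q ∈ PCeig F c (1/2:F)) :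
    (p * q) * c = (2 * lam F c (p * q)) • c - (p * q) := by
  obtain ⟨hv, hpi, hd⟩ := pq_dec h2 h3 hax hc0 hspan hp hq
  calc (p * q) * c = (lam F c (p * q) • c + sig F c (p * q)) * c := by rw [← hd]
    _ = lam F c (p * q) • (c * c) + c * sig F c (p * q) := by
        rw [add_mul, smul_mul_assoc, mul_comm (sig F c (p*q)) c]
    _ = lam F c (p * q) • c - sig F c (p * q) := by
        rw [hax.idem, mul_u hv]; abel
    _ = (2 * lam F c (p * q)) • c - (p * q) := by
        have hs : sig F c (p * q) = p * q - lam F c (p * q) • c :=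
          eq_sub_of_add_eq' hd.symm
        rw [hs]; match_scalars <;> (field_simp [h2, h3]; try ring)
end Axis

variable (F) in
noncomputable def Phi (c y z : A) : F :=
  lam F c (y * z) + 2 * lam F c ((c * y) * z) - 2 * lam F c y * lam F c z

section Axis2

variable {c : A} (h2 : (2:F) ≠ 0) (h3 : (3:F) ≠ 0)
  (hax : IsPCAxis F (-1 : F) c) (hc0 : c ≠ 0)
  (hspan : PCeig F c 1 = span F {c})

include h2 h3 hax hc0 hspan

lemma Phi_add_left (y₁ y₂ z : A) : Phi F c (y₁ + y₂) z = Phi F c y₁ z + Phi F c y₂ z := by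
  rw [Phi, Phi, Phi, add_mul, mul_add, add_mul, lam_add h2 h3 hax hc0 hspan,
    lam_add h2 h3 hax hc0 hspan, lam_add h2 h3 hax hc0 hspan]
  ring

lemma Phi_add_right (y z₁ z₂ : A) : Phi F c y (z₁ + z₂) = Phi F c y z₁ + Phi F c y z₂ := by
  rw [Phi, Phi, Phi, mul_add, mul_add, lam_add h2 h3 hax hc0 hspan,
    lam_add h2 h3 hax hc0 hspan, lam_add h2 h3 hax hc0 hspan]
  ring

lemma Phi_smul_left (t : F) (y z : A) : Phi F c (t • y) z = t * Phi F c y z := by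
  rw [Phi, Phi, smul_mul_assoc, mul_smul_comm, smul_mul_assoc, lam_smul h2 h3 hax hc0 hspan,
    lam_smul h2 h3 hax hc0 hspan, lam_smul h2 h3 hax hc0 hspan]
  ring

lemma Phi_smul_right (t : F) (y z : A) : Phi F c y (t • z) = t * Phi F c y z := by
  rw [Phi, Phi, mul_smul_comm, mul_smul_comm, lam_smul h2 h3 hax hc0 hspan,
    lam_smul h2 h3 hax hc0 hspan, lam_smul h2 h3 hax hc0 hspan]
  ring

lemma Phi_cc : Phi F c c c = 1 := by
  rw [Phi, hax.idem, hax.idem, lam_c h2 h3 hax hc0 hspan]; ring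

lemma Phi_cu {u : A} (hu : u ∈ PCeig F c (-1:F)) : Phi F c c u = 0 := by
  rw [Phi, hax.idem, mul_u hu, lam_neg h2 h3 hax hc0 hspan,
    lam_u h2 h3 hax hc0 hspan hu, lam_c h2 h3 hax hc0 hspan]
  ring

lemma Phi_cp {p : A} (hp : p ∈ PCeig F c (1/2:F)) : Phi F c c p = 0 := by
  rw [Phi, hax.idem, mul_p hp, lam_smul h2 h3 hax hc0 hspan,
    lam_p h2 h3 hax hc0 hspan hp, lam_c h2 h3 hax hc0 hspan]
  ring

lemma Phi_uc {u : A} (hu : u ∈ PCeig F c (-1:F)) : Phi F c u c = 0 := by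
  have h1 : u * c = -u := u_mul_c hu
  have h4 : (c * u) * c = u := by
    rw [mul_u hu, neg_mul, u_mul_c hu, neg_neg]
  rw [Phi, h1, h4, lam_neg h2 h3 hax hc0 hspan, lam_u h2 h3 hax hc0 hspan hu,
    lam_c h2 h3 hax hc0 hspan]
  ring

lemma Phi_pc {p : A} (hp : p ∈ PCeig F c (1/2:F)) : Phi F c p c = 0 := by
  have h1 : p * c = (1/2:F) • p := p_mul_c hp
  have h4 : (c * p) * c = (1/4:F) • p := by
    have h4' : (4:F) ≠ 0 := by have := mul_ne_zero h2 h2; norm_num at this ⊢; exact this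
    rw [mul_p hp, smul_mul_assoc, p_mul_c hp, smul_smul]
    match_scalars <;> (field_simp [h4']; try norm_num)
  rw [Phi, h1, h4, lam_smul h2 h3 hax hc0 hspan, lam_smul h2 h3 hax hc0 hspan,
    lam_p h2 h3 hax hc0 hspan hp, lam_c h2 h3 hax hc0 hspan]
  ring

lemma Phi_uv {u v : A} (hu : u ∈ PCeig F c (-1:F)) (hv : v ∈ PCeig F c (-1:F)) :
    Phi F c u v = - lam F c (u * v) := by
  have h4 : (c * u) * v = -(u * v) := by rw [mul_u hu, neg_mul]
  rw [Phi, h4, lam_neg h2 h3 hax hc0 hspan, lam_u h2 h3 hax hc0 hspan hu,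
    lam_u h2 h3 hax hc0 hspan hv]
  ring

lemma Phi_up {u p : A} (hu : u ∈ PCeig F c (-1:F)) (hp : p ∈ PCeig F c (1/2:F)) :
    Phi F c u p = 0 := by
  have h4 : (c * u) * p = -(u * p) := by rw [mul_u hu, neg_mul]
  rw [Phi, h4, lam_neg h2 h3 hax hc0 hspan,
    lam_p h2 h3 hax hc0 hspan (up_mem hax hu hp), lam_u h2 h3 hax hc0 hspan hu]
  ring

lemma Phi_pu {u p : A} (hu : u ∈ PCeig F c (-1:F)) (hp : p ∈ PCeig F c (1/2:F)) :
    Phi F c p u = 0 := by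
  have h0 : p * u ∈ PCeig F c (1/2:F) := by rw [mul_comm]; exact up_mem hax hu hp
  have h4 : (c * p) * u = (1/2:F) • (p * u) := by rw [mul_p hp, smul_mul_assoc]
  rw [Phi, h4, lam_smul h2 h3 hax hc0 hspan, lam_p h2 h3 hax hc0 hspan h0,
    lam_p h2 h3 hax hc0 hspan hp]
  ring

lemma Phi_pq {p q : A} (hp : p ∈ PCeig F c (1/2:F)) (hq : q ∈ PCeig F c (1/2:F)) :
    Phi F c p q = 2 * lam F c (p * q) := by
  have h4 : (c * p) * q = (1/2:F) • (p * q) := by rw [mul_p hp, smul_mul_assoc]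
  rw [Phi, h4, lam_smul h2 h3 hax hc0 hspan, lam_p h2 h3 hax hc0 hspan hp]
  field_simp
  ring


lemma exists_dec (y : A) : ∃ (t : F) (u p : A), u ∈ PCeig F c (-1:F) ∧ p ∈ PCeig F c (1/2:F) ∧
    y = t • c + u + p :=
  ⟨lam F c y, sig F c y, pii F c y, sig_mem h2 h3 hax hc0 hspan y,
    pii_mem h2 h3 hax hc0 hspan y, dec_y h2 h3 hax hc0 hspan y⟩

omit h2 h3 hax hc0 hspan in
lemma T_add_right (y z₁ z₂ : A) :
    (c*y)*(z₁+z₂) + (y*(z₁+z₂))*c + ((z₁+z₂)*c)*y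
    = ((c*y)*z₁ + (y*z₁)*c + (z₁*c)*y) + ((c*y)*z₂ + (y*z₂)*c + (z₂*c)*y) := by
  simp only [mul_add, add_mul]; abel

omit h2 h3 hax hc0 hspan in
lemma T_smul_right (t : F) (y z : A) :
    (c*y)*(t•z) + (y*(t•z))*c + ((t•z)*c)*y
    = t • ((c*y)*z + (y*z)*c + (z*c)*y) := by
  simp only [mul_smul_comm, smul_mul_assoc, smul_add]

omit h2 h3 hax hc0 hspan in
lemma T_add_left (y₁ y₂ z : A) :
    (c*(y₁+y₂))*z + ((y₁+y₂)*z)*c + (z*c)*(y₁+y₂)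
    = ((c*y₁)*z + (y₁*z)*c + (z*c)*y₁) + ((c*y₂)*z + (y₂*z)*c + (z*c)*y₂) := by
  simp only [mul_add, add_mul]; abel

omit h2 h3 hax hc0 hspan in
lemma T_smul_left (t : F) (y z : A) :
    (c*(t•y))*z + ((t•y)*z)*c + (z*c)*(t•y)
    = t • ((c*y)*z + (y*z)*c + (z*c)*y) := by
  simp only [mul_smul_comm, smul_mul_assoc, smul_add]

lemma R_add_right (y z₁ z₂ : A) :
    Phi F c c y • (z₁+z₂) + Phi F c y (z₁+z₂) • c + Phi F c (z₁+z₂) c • y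
    = (Phi F c c y • z₁ + Phi F c y z₁ • c + Phi F c z₁ c • y)
      + (Phi F c c y • z₂ + Phi F c y z₂ • c + Phi F c z₂ c • y) := by
  rw [Phi_add_right h2 h3 hax hc0 hspan, Phi_add_left h2 h3 hax hc0 hspan,
    smul_add, add_smul, add_smul]
  abel

lemma R_smul_right (t : F) (y z : A) :
    Phi F c c y • (t•z) + Phi F c y (t•z) • c + Phi F c (t•z) c • y
    = t • (Phi F c c y • z + Phi F c y z • c + Phi F c z c • y) := by
  rw [Phi_smul_right h2 h3 hax hc0 hspan, Phi_smul_left h2 h3 hax hc0 hspan]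
  module

lemma R_add_left (y₁ y₂ z : A) :
    Phi F c c (y₁+y₂) • z + Phi F c (y₁+y₂) z • c + Phi F c z c • (y₁+y₂)
    = (Phi F c c y₁ • z + Phi F c y₁ z • c + Phi F c z c • y₁)
      + (Phi F c c y₂ • z + Phi F c y₂ z • c + Phi F c z c • y₂) := by
  rw [Phi_add_right h2 h3 hax hc0 hspan, Phi_add_left h2 h3 hax hc0 hspan,
    smul_add, add_smul, add_smul]
  abel

lemma R_smul_left (t : F) (y z : A) :
    Phi F c c (t•y) • z + Phi F c (t•y) z • c + Phi F c z c • (t•y)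
    = t • (Phi F c c y • z + Phi F c y z • c + Phi F c z c • y) := by
  rw [Phi_smul_right h2 h3 hax hc0 hspan, Phi_smul_left h2 h3 hax hc0 hspan]
  module

lemma lemA_cc :
    (c*c)*c + (c*c)*c + (c*c)*c = Phi F c c c • c + Phi F c c c • c + Phi F c c c • c := by
  rw [hax.idem, hax.idem, Phi_cc h2 h3 hax hc0 hspan]
  module

lemma lemA_cu {u : A} (hu : u ∈ PCeig F c (-1:F)) :
    (c*c)*u + (c*u)*c + (u*c)*c = Phi F c c c • u + Phi F c c u • c + Phi F c u c • c := by
  have e1 : (c*c)*u = -u := by rw [hax.idem, mul_u hu]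
  have e2 : (c*u)*c = u := by rw [mul_u hu, neg_mul, u_mul_c hu, neg_neg]
  have e3 : (u*c)*c = u := by rw [u_mul_c hu, neg_mul, u_mul_c hu, neg_neg]
  rw [e1, e2, e3, Phi_cc h2 h3 hax hc0 hspan, Phi_cu h2 h3 hax hc0 hspan hu,
    Phi_uc h2 h3 hax hc0 hspan hu]
  module

lemma lemA_cp {p : A} (hp : p ∈ PCeig F c (1/2:F)) :
    (c*c)*p + (c*p)*c + (p*c)*c = Phi F c c c • p + Phi F c c p • c + Phi F c p c • c := by
  have e1 : (c*c)*p = (1/2:F) • p := by rw [hax.idem, mul_p hp]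
  have e2 : (c*p)*c = (1/2:F) • ((1/2:F) • p) := by
    rw [mul_p hp, smul_mul_assoc, p_mul_c hp]
  have e3 : (p*c)*c = (1/2:F) • ((1/2:F) • p) := by
    rw [p_mul_c hp, smul_mul_assoc, p_mul_c hp]
  rw [e1, e2, e3, Phi_cc h2 h3 hax hc0 hspan, Phi_cp h2 h3 hax hc0 hspan hp,
    Phi_pc h2 h3 hax hc0 hspan hp]
  match_scalars <;> (field_simp [h2, h3]; try ring)

lemma lemA_uc {u : A} (hu : u ∈ PCeig F c (-1:F)) :
    (c*u)*c + (u*c)*c + (c*c)*u = Phi F c c u • c + Phi F c u c • c + Phi F c c c • u := by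
  have e1 : (c*u)*c = u := by rw [mul_u hu, neg_mul, u_mul_c hu, neg_neg]
  have e2 : (u*c)*c = u := by rw [u_mul_c hu, neg_mul, u_mul_c hu, neg_neg]
  have e3 : (c*c)*u = -u := by rw [hax.idem, mul_u hu]
  rw [e1, e2, e3, Phi_cc h2 h3 hax hc0 hspan, Phi_cu h2 h3 hax hc0 hspan hu,
    Phi_uc h2 h3 hax hc0 hspan hu]
  module

lemma lemA_pc {p : A} (hp : p ∈ PCeig F c (1/2:F)) :
    (c*p)*c + (p*c)*c + (c*c)*p = Phi F c c p • c + Phi F c p c • c + Phi F c c c • p := by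
  have e1 : (c*p)*c = (1/2:F) • ((1/2:F) • p) := by
    rw [mul_p hp, smul_mul_assoc, p_mul_c hp]
  have e2 : (p*c)*c = (1/2:F) • ((1/2:F) • p) := by
    rw [p_mul_c hp, smul_mul_assoc, p_mul_c hp]
  have e3 : (c*c)*p = (1/2:F) • p := by rw [hax.idem, mul_p hp]
  rw [e1, e2, e3, Phi_cc h2 h3 hax hc0 hspan, Phi_cp h2 h3 hax hc0 hspan hp,
    Phi_pc h2 h3 hax hc0 hspan hp]
  match_scalars <;> (field_simp [h2, h3]; try ring)

lemma lemA_uv {u v : A} (hu : u ∈ PCeig F c (-1:F)) (hv : v ∈ PCeig F c (-1:F)) :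
    (c*u)*v + (u*v)*c + (v*c)*u = Phi F c c u • v + Phi F c u v • c + Phi F c v c • u := by
  have e2 : (u*v)*c = lam F c (u*v) • c := by
    conv_lhs => rw [uu_eq h2 h3 hax hc0 hspan hu hv]
    rw [smul_mul_assoc, hax.idem]
  have e1 : (c*u)*v = -(lam F c (u*v) • c) := by
    rw [mul_u hu, neg_mul]
    conv_lhs => rw [uu_eq h2 h3 hax hc0 hspan hu hv]
  have e3 : (v*c)*u = -(lam F c (u*v) • c) := by
    rw [u_mul_c hv, neg_mul, mul_comm v u]
    conv_lhs => rw [uu_eq h2 h3 hax hc0 hspan hu hv]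
  rw [e1, e2, e3, Phi_cu h2 h3 hax hc0 hspan hu, Phi_uv h2 h3 hax hc0 hspan hu hv,
    Phi_uc h2 h3 hax hc0 hspan hv]
  module

lemma lemA_uq {u q : A} (hu : u ∈ PCeig F c (-1:F)) (hq : q ∈ PCeig F c (1/2:F)) :
    (c*u)*q + (u*q)*c + (q*c)*u = Phi F c c u • q + Phi F c u q • c + Phi F c q c • u := by
  have e1 : (c*u)*q = -(u*q) := by rw [mul_u hu, neg_mul]
  have e2 : (u*q)*c = (1/2:F) • (u*q) := p_mul_c (up_mem hax hu hq)
  have e3 : (q*c)*u = (1/2:F) • (u*q) := by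
    rw [p_mul_c hq, smul_mul_assoc, mul_comm q u]
  rw [e1, e2, e3, Phi_cu h2 h3 hax hc0 hspan hu, Phi_up h2 h3 hax hc0 hspan hu hq,
    Phi_pc h2 h3 hax hc0 hspan hq]
  match_scalars <;> (field_simp [h2, h3]; try ring)

lemma lemA_pv {p v : A} (hp : p ∈ PCeig F c (1/2:F)) (hv : v ∈ PCeig F c (-1:F)) :
    (c*p)*v + (p*v)*c + (v*c)*p = Phi F c c p • v + Phi F c p v • c + Phi F c v c • p := by
  have hpv : p * v ∈ PCeig F c (1/2:F) := by rw [mul_comm]; exact up_mem hax hv hp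
  have e1 : (c*p)*v = (1/2:F) • (p*v) := by rw [mul_p hp, smul_mul_assoc]
  have e2 : (p*v)*c = (1/2:F) • (p*v) := p_mul_c hpv
  have e3 : (v*c)*p = -(p*v) := by rw [u_mul_c hv, neg_mul, mul_comm v p]
  rw [e1, e2, e3, Phi_cp h2 h3 hax hc0 hspan hp, Phi_pu h2 h3 hax hc0 hspan hv hp,
    Phi_uc h2 h3 hax hc0 hspan hv]
  match_scalars <;> (field_simp [h2, h3]; try ring)

lemma lemA_pq {p q : A} (hp : p ∈ PCeig F c (1/2:F)) (hq : q ∈ PCeig F c (1/2:F)) :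
    (c*p)*q + (p*q)*c + (q*c)*p = Phi F c c p • q + Phi F c p q • c + Phi F c q c • p := by
  have e1 : (c*p)*q = (1/2:F) • (p*q) := by rw [mul_p hp, smul_mul_assoc]
  have e2 : (p*q)*c = (2 * lam F c (p*q)) • c - (p*q) := pq_mul_c h2 h3 hax hc0 hspan hp hq
  have e3 : (q*c)*p = (1/2:F) • (p*q) := by
    rw [p_mul_c hq, smul_mul_assoc, mul_comm q p]
  rw [e1, e2, e3, Phi_cp h2 h3 hax hc0 hspan hp, Phi_pq h2 h3 hax hc0 hspan hp hq,
    Phi_pc h2 h3 hax hc0 hspan hq]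
  match_scalars <;> (field_simp [h2, h3]; try ring)

lemma lemA_c (z : A) :
    (c*c)*z + (c*z)*c + (z*c)*c = Phi F c c c • z + Phi F c c z • c + Phi F c z c • c := by
  obtain ⟨t, v, q, hv, hq, rfl⟩ := exists_dec h2 h3 hax hc0 hspan z
  rw [T_add_right, T_add_right, T_smul_right, R_add_right h2 h3 hax hc0 hspan,
    R_add_right h2 h3 hax hc0 hspan, R_smul_right h2 h3 hax hc0 hspan,
    lemA_cc h2 h3 hax hc0 hspan, lemA_cu h2 h3 hax hc0 hspan hv,
    lemA_cp h2 h3 hax hc0 hspan hq]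

lemma lemA_u {u : A} (hu : u ∈ PCeig F c (-1:F)) (z : A) :
    (c*u)*z + (u*z)*c + (z*c)*u = Phi F c c u • z + Phi F c u z • c + Phi F c z c • u := by
  obtain ⟨t, v, q, hv, hq, rfl⟩ := exists_dec h2 h3 hax hc0 hspan z
  rw [T_add_right, T_add_right, T_smul_right, R_add_right h2 h3 hax hc0 hspan,
    R_add_right h2 h3 hax hc0 hspan, R_smul_right h2 h3 hax hc0 hspan,
    lemA_uc h2 h3 hax hc0 hspan hu, lemA_uv h2 h3 hax hc0 hspan hu hv,
    lemA_uq h2 h3 hax hc0 hspan hu hq]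

lemma lemA_p {p : A} (hp : p ∈ PCeig F c (1/2:F)) (z : A) :
    (c*p)*z + (p*z)*c + (z*c)*p = Phi F c c p • z + Phi F c p z • c + Phi F c z c • p := by
  obtain ⟨t, v, q, hv, hq, rfl⟩ := exists_dec h2 h3 hax hc0 hspan z
  rw [T_add_right, T_add_right, T_smul_right, R_add_right h2 h3 hax hc0 hspan,
    R_add_right h2 h3 hax hc0 hspan, R_smul_right h2 h3 hax hc0 hspan,
    lemA_pc h2 h3 hax hc0 hspan hp, lemA_pv h2 h3 hax hc0 hspan hp hv,
    lemA_pq h2 h3 hax hc0 hspan hp hq]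

/-- Lemma A : the linearised pseudo-composition law with first slot at the axis. -/
lemma lemA (y z : A) :
    (c*y)*z + (y*z)*c + (z*c)*y = Phi F c c y • z + Phi F c y z • c + Phi F c z c • y := by
  obtain ⟨t, u, p, hu, hp, rfl⟩ := exists_dec h2 h3 hax hc0 hspan y
  rw [T_add_left, T_add_left, T_smul_left, R_add_left h2 h3 hax hc0 hspan,
    R_add_left h2 h3 hax hc0 hspan, R_smul_left h2 h3 hax hc0 hspan,
    lemA_c h2 h3 hax hc0 hspan z, lemA_u h2 h3 hax hc0 hspan hu z,
    lemA_p h2 h3 hax hc0 hspan hp z]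

end Axis2



variable (F) in
/-- The Miyamoto involution attached to the axis `c`. -/
noncomputable def tau (c y : A) : A := lam F c y • c + sig F c y - pii F c y

section Tau

variable {c : A} (h2 : (2:F) ≠ 0) (h3 : (3:F) ≠ 0)
  (hax : IsPCAxis F (-1 : F) c) (hc0 : c ≠ 0)
  (hspan : PCeig F c 1 = span F {c})

include h2 h3 hax hc0 hspan

lemma tau_eq (y : A) : tau F c y = y - (2:F) • pii F c y := by
  rw [tau]
  calc lam F c y • c + sig F c y - pii F c y
      = (lam F c y • c + sig F c y + pii F c y) - (2:F) • pii F c y := by module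
    _ = y - (2:F) • pii F c y := by rw [← dec_y h2 h3 hax hc0 hspan]

lemma tau_u {u : A} (hu : u ∈ PCeig F c (-1:F)) : tau F c u = u := by
  rw [tau_eq h2 h3 hax hc0 hspan, pii_u h2 h3 hax hc0 hspan hu, smul_zero, sub_zero]

lemma tau_p {p : A} (hp : p ∈ PCeig F c (1/2:F)) : tau F c p = -p := by
  rw [tau_eq h2 h3 hax hc0 hspan, pii_p h2 h3 hax hc0 hspan hp]
  match_scalars <;> (field_simp [h2, h3]; try ring)

lemma pii_c : pii F c c = 0 :=
  pii_eq h2 h3 hax hc0 hspan (t := 1) (zero_mem _) (zero_mem _) (by simp)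

lemma tau_tc (t : F) : tau F c (t • c) = t • c := by
  rw [tau_eq h2 h3 hax hc0 hspan, pii_smul h2 h3 hax hc0 hspan,
    pii_c h2 h3 hax hc0 hspan, smul_zero, smul_zero, sub_zero]

lemma tau_c : tau F c c = c := by
  have := tau_tc h2 h3 hax hc0 hspan 1; simpa using this

lemma tau_zero : tau F c 0 = 0 := by
  have := tau_tc h2 h3 hax hc0 hspan 0; simpa using this

lemma tau_add (y z : A) : tau F c (y + z) = tau F c y + tau F c z := by
  rw [tau_eq h2 h3 hax hc0 hspan, tau_eq h2 h3 hax hc0 hspan,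
    tau_eq h2 h3 hax hc0 hspan, pii_add h2 h3 hax hc0 hspan]
  module

lemma tau_smul (t : F) (y : A) : tau F c (t • y) = t • tau F c y := by
  rw [tau_eq h2 h3 hax hc0 hspan, tau_eq h2 h3 hax hc0 hspan,
    pii_smul h2 h3 hax hc0 hspan]
  module

lemma tau_neg (y : A) : tau F c (-y) = - tau F c y := by
  have := tau_smul h2 h3 hax hc0 hspan (-1 : F) y; simpa using this

lemma tau_sub (y z : A) : tau F c (y - z) = tau F c y - tau F c z := by
  rw [sub_eq_add_neg, tau_add h2 h3 hax hc0 hspan, tau_neg h2 h3 hax hc0 hspan,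
    sub_eq_add_neg]

lemma tau_invol (y : A) : tau F c (tau F c y) = y := by
  have e : tau F c y = lam F c y • c + sig F c y + (-(pii F c y)) := by
    rw [tau]; abel
  have hpi : pii F c (tau F c y) = -(pii F c y) :=
    pii_eq h2 h3 hax hc0 hspan (sig_mem h2 h3 hax hc0 hspan y)
      (neg_mem (pii_mem h2 h3 hax hc0 hspan y)) e
  rw [tau_eq h2 h3 hax hc0 hspan, hpi, tau_eq h2 h3 hax hc0 hspan]
  module

lemma tau_eval {t : F} {u p : A} (hu : u ∈ PCeig F c (-1:F)) (hp : p ∈ PCeig F c (1/2:F)) :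
    tau F c (t • c + u + p) = t • c + u - p := by
  rw [tau_eq h2 h3 hax hc0 hspan,
    pii_eq h2 h3 hax hc0 hspan hu hp rfl]
  module

lemma tau_pq {p q : A} (hp : p ∈ PCeig F c (1/2:F)) (hq : q ∈ PCeig F c (1/2:F)) :
    tau F c (p * q) = p * q := by
  obtain ⟨hv, hpi, hd⟩ := pq_dec h2 h3 hax hc0 hspan hp hq
  rw [tau_eq h2 h3 hax hc0 hspan, hpi, smul_zero, sub_zero]

lemma tauM_c (z : A) : tau F c (c * z) = c * tau F c z := by
  obtain ⟨t, v, q, hv, hq, rfl⟩ := exists_dec h2 h3 hax hc0 hspan z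
  have e1 : c * (t • c + v + q) = t • c + (-v) + (1/2:F) • q := by
    rw [mul_add, mul_add, mul_smul_comm, hax.idem, mul_u hv, mul_p hq]
  have e2 : tau F c (t • c + v + q) = t • c + v - q := tau_eval h2 h3 hax hc0 hspan hv hq
  have e3 : c * (t • c + v - q) = t • c + (-v) - (1/2:F) • q := by
    rw [sub_eq_add_neg, mul_add, mul_add, mul_smul_comm, hax.idem, mul_u hv, mul_neg,
      mul_p hq]
    module
  rw [e1, e2, e3]
  have e4 : t • c + (-v) + (1/2:F) • q = t • c + (-v) + (1/2:F) • q := rfl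
  have e5 : tau F c (t • c + (-v) + (1/2:F) • q) = t • c + (-v) - (1/2:F) • q :=
    tau_eval h2 h3 hax hc0 hspan (neg_mem hv) (smul_mem _ _ hq)
  rw [e5]

lemma tau_uv {u v : A} (hu : u ∈ PCeig F c (-1:F)) (hv : v ∈ PCeig F c (-1:F)) :
    tau F c (u * v) = u * v := by
  rw [uu_eq h2 h3 hax hc0 hspan hu hv, tau_tc h2 h3 hax hc0 hspan]

lemma tauM_u {u : A} (hu : u ∈ PCeig F c (-1:F)) (z : A) :
    tau F c (u * z) = u * tau F c z := by
  obtain ⟨t, v, q, hv, hq, rfl⟩ := exists_dec h2 h3 hax hc0 hspan z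
  have e1 : u * (t • c + v + q) = t • (-u) + u * v + u * q := by
    rw [mul_add, mul_add, mul_smul_comm, u_mul_c hu]
  have e2 : tau F c (t • c + v + q) = t • c + v - q := tau_eval h2 h3 hax hc0 hspan hv hq
  have e3 : u * (t • c + v - q) = t • (-u) + u * v - u * q := by
    rw [sub_eq_add_neg, mul_add, mul_add, mul_smul_comm, u_mul_c hu, mul_neg]
    module
  rw [e1, e2, e3, tau_add h2 h3 hax hc0 hspan, tau_add h2 h3 hax hc0 hspan,
    tau_smul h2 h3 hax hc0 hspan, tau_neg h2 h3 hax hc0 hspan,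
    tau_u h2 h3 hax hc0 hspan hu, tau_uv h2 h3 hax hc0 hspan hu hv,
    tau_p h2 h3 hax hc0 hspan (up_mem hax hu hq)]
  module

lemma tauM_p {p : A} (hp : p ∈ PCeig F c (1/2:F)) (z : A) :
    tau F c (p * z) = -(p * tau F c z) := by
  obtain ⟨t, v, q, hv, hq, rfl⟩ := exists_dec h2 h3 hax hc0 hspan z
  have hpv : p * v ∈ PCeig F c (1/2:F) := by rw [mul_comm]; exact up_mem hax hv hp
  have e1 : p * (t • c + v + q) = t • ((1/2:F) • p) + p * v + p * q := by
    rw [mul_add, mul_add, mul_smul_comm, p_mul_c hp]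
  have e2 : tau F c (t • c + v + q) = t • c + v - q := tau_eval h2 h3 hax hc0 hspan hv hq
  have e3 : p * (t • c + v - q) = t • ((1/2:F) • p) + p * v - p * q := by
    rw [sub_eq_add_neg, mul_add, mul_add, mul_smul_comm, p_mul_c hp, mul_neg]
    module
  rw [e1, e2, e3, tau_add h2 h3 hax hc0 hspan, tau_add h2 h3 hax hc0 hspan,
    tau_smul h2 h3 hax hc0 hspan, tau_smul h2 h3 hax hc0 hspan,
    tau_p h2 h3 hax hc0 hspan hp, tau_p h2 h3 hax hc0 hspan hpv,
    tau_pq h2 h3 hax hc0 hspan hp hq]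
  module

lemma tau_mul (y z : A) : tau F c (y * z) = tau F c y * tau F c z := by
  obtain ⟨t, u, p, hu, hp, rfl⟩ := exists_dec h2 h3 hax hc0 hspan y
  have e1 : (t • c + u + p) * z = t • (c * z) + u * z + p * z := by
    rw [add_mul, add_mul, smul_mul_assoc]
  have e2 : tau F c (t • c + u + p) = t • c + u - p := tau_eval h2 h3 hax hc0 hspan hu hp
  have e3 : (t • c + u - p) * tau F c z
      = t • (c * tau F c z) + u * tau F c z - p * tau F c z := by
    rw [sub_eq_add_neg, add_mul, add_mul, smul_mul_assoc, neg_mul]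
    module
  rw [e1, e2, e3, tau_add h2 h3 hax hc0 hspan, tau_add h2 h3 hax hc0 hspan,
    tau_smul h2 h3 hax hc0 hspan, tauM_c h2 h3 hax hc0 hspan,
    tauM_u h2 h3 hax hc0 hspan hu, tauM_p h2 h3 hax hc0 hspan hp]
  module

lemma tau_mem_iff {d : A} {μ : F} (x : A) :
    x ∈ PCeig F (tau F c d) μ ↔ tau F c x ∈ PCeig F d μ := by
  rw [mem_PCeig, mem_PCeig]
  constructor
  · intro h
    have := congrArg (tau F c) h
    rw [tau_mul h2 h3 hax hc0 hspan, tau_invol h2 h3 hax hc0 hspan,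
      tau_smul h2 h3 hax hc0 hspan] at this
    exact this
  · intro h
    have := congrArg (tau F c) h
    rw [tau_mul h2 h3 hax hc0 hspan, tau_invol h2 h3 hax hc0 hspan,
      tau_smul h2 h3 hax hc0 hspan, tau_invol h2 h3 hax hc0 hspan] at this
    exact this

lemma tau_axis {d : A} (hd : IsPrimPCAxis F (-1:F) d) :
    IsPrimPCAxis F (-1:F) (tau F c d) := by
  obtain ⟨hdax, hd0, hdspan⟩ := hd
  have tmi : ∀ {μ : F} (x : A), x ∈ PCeig F (tau F c d) μ ↔ tau F c x ∈ PCeig F d μ :=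
    fun x => tau_mem_iff h2 h3 hax hc0 hspan x
  have fusgen : ∀ (μ ν ρ : F), (∀ x ∈ PCeig F d μ, ∀ y ∈ PCeig F d ν, x * y ∈ PCeig F d ρ) →
      ∀ x ∈ PCeig F (tau F c d) μ, ∀ y ∈ PCeig F (tau F c d) ν,
        x * y ∈ PCeig F (tau F c d) ρ := by
    intro μ ν ρ hf x hx y hy
    refine (tmi _).mpr ?_
    rw [tau_mul h2 h3 hax hc0 hspan]
    exact hf _ ((tmi x).mp hx) _ ((tmi y).mp hy)
  refine ⟨⟨?_, ?_, fusgen _ _ _ hdax.fus11, fusgen _ _ _ hdax.fus1e,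
    fusgen _ _ _ hdax.fus1h, fusgen _ _ _ hdax.fusee, fusgen _ _ _ hdax.fuseh, ?_⟩, ?_, ?_⟩
  · rw [← tau_mul h2 h3 hax hc0 hspan, hdax.idem]
  · rw [eq_top_iff]
    intro y _
    have hy : tau F c y ∈ (⊤ : Submodule F A) := trivial
    rw [← hdax.decomp] at hy
    obtain ⟨e, he, q, hq, hy1⟩ := mem_sup.mp hy
    obtain ⟨e1, he1, v, hv, he2⟩ := mem_sup.mp he
    have hyy : y = tau F c e1 + tau F c v + tau F c q := by
      have h0 : tau F c y = e1 + v + q := by rw [← hy1, ← he2]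
      have := congrArg (tau F c) h0
      rw [tau_invol h2 h3 hax hc0 hspan, tau_add h2 h3 hax hc0 hspan,
        tau_add h2 h3 hax hc0 hspan] at this
      exact this
    have m1 : tau F c e1 ∈ PCeig F (tau F c d) 1 :=
      (tmi _).mpr (by rw [tau_invol h2 h3 hax hc0 hspan]; exact he1)
    have m2 : tau F c v ∈ PCeig F (tau F c d) (-1:F) :=
      (tmi _).mpr (by rw [tau_invol h2 h3 hax hc0 hspan]; exact hv)
    have m3 : tau F c q ∈ PCeig F (tau F c d) (1/2:F) :=
      (tmi _).mpr (by rw [tau_invol h2 h3 hax hc0 hspan]; exact hq)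
    exact mem_sup.mpr ⟨tau F c e1 + tau F c v,
      mem_sup.mpr ⟨tau F c e1, m1, tau F c v, m2, rfl⟩, tau F c q, m3, hyy.symm⟩
  · -- fushh
    intro x hx y hy
    have hm : tau F c x * tau F c y ∈ PCeig F d 1 ⊔ PCeig F d (-1:F) :=
      hdax.fushh _ ((tmi x).mp hx) _ ((tmi y).mp hy)
    obtain ⟨e, he, v, hv, hsum⟩ := mem_sup.mp hm
    have hxy : x * y = tau F c e + tau F c v := by
      have h0 : tau F c (x * y) = e + v := by
        rw [tau_mul h2 h3 hax hc0 hspan]; exact hsum.symm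
      have := congrArg (tau F c) h0
      rw [tau_invol h2 h3 hax hc0 hspan, tau_add h2 h3 hax hc0 hspan] at this
      exact this
    rw [hxy]
    exact mem_sup.mpr ⟨tau F c e,
      (tmi _).mpr (by rw [tau_invol h2 h3 hax hc0 hspan]; exact he), tau F c v,
      (tmi _).mpr (by rw [tau_invol h2 h3 hax hc0 hspan]; exact hv), rfl⟩
  · -- nonzero
    intro h
    apply hd0
    have := congrArg (tau F c) h
    rw [tau_invol h2 h3 hax hc0 hspan, tau_zero h2 h3 hax hc0 hspan] at this
    exact this
  · -- primitivity
    apply le_antisymm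
    · intro x hx
      have := (tmi x).mp hx
      rw [hdspan] at this
      obtain ⟨t, ht⟩ := mem_span_singleton.mp this
      have hx' : x = t • tau F c d := by
        have := congrArg (tau F c) ht
        rw [tau_smul h2 h3 hax hc0 hspan, tau_invol h2 h3 hax hc0 hspan] at this
        exact this.symm
      exact mem_span_singleton.mpr ⟨t, hx'.symm⟩
    · intro x hx
      obtain ⟨t, ht⟩ := mem_span_singleton.mp hx
      refine (tmi x).mpr ?_
      have : tau F c x = t • d := by
        rw [← ht, tau_smul h2 h3 hax hc0 hspan, tau_invol h2 h3 hax hc0 hspan]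
      rw [this, hdspan]
      exact mem_span_singleton.mpr ⟨t, rfl⟩

end Tau

section Span

variable (h2 : (2:F) ≠ 0) (h3 : (3:F) ≠ 0)

include h2 h3

lemma axis_mul_mem_span {c d : A} (hc : IsPrimPCAxis F (-1:F) c)
    (hd : IsPrimPCAxis F (-1:F) d) :
    c * d ∈ span F {x : A | IsPrimPCAxis F (-1:F) x} := by
  obtain ⟨hax, hc0, hspan⟩ := hc
  obtain ⟨l, u, p, hu, hp, rfl⟩ := exists_dec h2 h3 hax hc0 hspan d
  have htau : IsPrimPCAxis F (-1:F) (tau F c (l • c + u + p)) :=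
    tau_axis h2 h3 hax hc0 hspan hd
  have htv : tau F c (l • c + u + p) = l • c + u - p := tau_eval h2 h3 hax hc0 hspan hu hp
  rw [htv] at htau
  have hmul : c * (l • c + u + p) = l • c - u + (1/2:F) • p := by
    rw [mul_add, mul_add, mul_smul_comm, hax.idem, mul_u hu, mul_p hp]
    module
  rw [hmul]
  have h4' : (4:F) ≠ 0 := by
    have := mul_ne_zero h2 h2; norm_num at this ⊢; exact this
  have key : l • c - u + (1/2:F) • p
      = (2*l) • c + (-(1/4:F)) • (l • c + u + p) + (-(3/4:F)) • (l • c + u - p) := by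
    match_scalars <;> (field_simp [h2, h3, h4']; try ring)
  rw [key]
  exact add_mem (add_mem (smul_mem _ _ (subset_span ⟨hax, hc0, hspan⟩))
    (smul_mem _ _ (subset_span hd))) (smul_mem _ _ (subset_span htau))

lemma spanY_mul_mem {x y : A} (hx : x ∈ span F {x : A | IsPrimPCAxis F (-1:F) x})
    (hy : y ∈ span F {x : A | IsPrimPCAxis F (-1:F) x}) :
    x * y ∈ span F {x : A | IsPrimPCAxis F (-1:F) x} := by
  induction hx using span_induction with
  | mem c hc =>
    induction hy using span_induction with
    | mem d hd => exact axis_mul_mem_span h2 h3 hc hd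
    | zero => rw [mul_zero]; exact zero_mem _
    | add y₁ y₂ _ _ ih1 ih2 => rw [mul_add]; exact add_mem ih1 ih2
    | smul t y₁ _ ih => rw [mul_smul_comm]; exact smul_mem _ _ ih
  | zero => rw [zero_mul]; exact zero_mem _
  | add x₁ x₂ _ _ ih1 ih2 => rw [add_mul]; exact add_mem ih1 ih2
  | smul t x₁ _ ih => rw [smul_mul_assoc]; exact smul_mem _ _ ih

lemma spanY_eq_top (hA : IsPrimPCAxialAlgebra F A (-1:F)) :
    span F {x : A | IsPrimPCAxis F (-1:F) x} = ⊤ := by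
  obtain ⟨X, hXne, hXax, hXtop⟩ := hA
  let S : NonUnitalSubalgebra F A :=
    Submodule.toNonUnitalSubalgebra (span F {x : A | IsPrimPCAxis F (-1:F) x})
      (fun x y hx hy => spanY_mul_mem h2 h3 hx hy)
  have hle : NonUnitalAlgebra.adjoin F X ≤ S :=
    NonUnitalAlgebra.adjoin_le (fun a ha => subset_span (hXax a ha))
  rw [hXtop] at hle
  rw [eq_top_iff]
  exact fun x _ => hle (by trivial)

end Span

section Comm

variable {c : A} (h2 : (2:F) ≠ 0) (h3 : (3:F) ≠ 0)
  (hax : IsPCAxis F (-1 : F) c) (hc0 : c ≠ 0)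
  (hspan : PCeig F c 1 = span F {c})

include h2 h3 hax hc0 hspan

lemma Phi_comm (y z : A) : Phi F c y z = Phi F c z y := by
  obtain ⟨t, u, p, hu, hp, rfl⟩ := exists_dec h2 h3 hax hc0 hspan y
  obtain ⟨s, v, q, hv, hq, rfl⟩ := exists_dec h2 h3 hax hc0 hspan z
  simp only [Phi_add_left h2 h3 hax hc0 hspan, Phi_add_right h2 h3 hax hc0 hspan,
    Phi_smul_left h2 h3 hax hc0 hspan, Phi_smul_right h2 h3 hax hc0 hspan,
    Phi_cc h2 h3 hax hc0 hspan, Phi_cu h2 h3 hax hc0 hspan hu, Phi_cu h2 h3 hax hc0 hspan hv,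
    Phi_cp h2 h3 hax hc0 hspan hp, Phi_cp h2 h3 hax hc0 hspan hq,
    Phi_uc h2 h3 hax hc0 hspan hu, Phi_uc h2 h3 hax hc0 hspan hv,
    Phi_pc h2 h3 hax hc0 hspan hp, Phi_pc h2 h3 hax hc0 hspan hq,
    Phi_uv h2 h3 hax hc0 hspan hu hv, Phi_uv h2 h3 hax hc0 hspan hv hu,
    Phi_up h2 h3 hax hc0 hspan hu hq, Phi_up h2 h3 hax hc0 hspan hv hp,
    Phi_pu h2 h3 hax hc0 hspan hu hq, Phi_pu h2 h3 hax hc0 hspan hv hp,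
    Phi_pq h2 h3 hax hc0 hspan hp hq, Phi_pq h2 h3 hax hc0 hspan hq hp]
  rw [mul_comm v u, mul_comm q p]
  ring

lemma Phi_zero_left (z : A) : Phi F c 0 z = 0 := by
  have := Phi_smul_left h2 h3 hax hc0 hspan 0 0 z
  simpa using this

end Comm

section LemC

variable (h2 : (2:F) ≠ 0) (h3 : (3:F) ≠ 0)

include h2 h3

lemma axes_indep {c d : A} (hc : IsPrimPCAxis F (-1:F) c) (hd : IsPrimPCAxis F (-1:F) d)
    (hne : c ≠ d) {s t : F} (h : s • c + t • d = 0) : s = 0 ∧ t = 0 := by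
  by_cases ht : t = 0
  · subst ht
    rw [zero_smul, add_zero] at h
    rcases smul_eq_zero.mp h with h' | h'
    · exact ⟨h', rfl⟩
    · exact absurd h' hc.2.1
  · exfalso
    have htd : t • d = -(s • c) := by linear_combination (norm := module) h
    have hd' : d = (-(s/t)) • c := by
      calc d = (t⁻¹ * t) • d := by rw [inv_mul_cancel₀ ht, one_smul]
        _ = t⁻¹ • (t • d) := by rw [mul_smul]
        _ = t⁻¹ • (-(s • c)) := by rw [htd]
        _ = (-(s/t)) • c := by match_scalars <;> (field_simp; try ring)
    set r : F := -(s/t) with hr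
    have hr0 : r ≠ 0 := by
      intro h0
      apply hd.2.1
      rw [hd', h0, zero_smul]
    have hh : (r*r) • c = r • c := by
      calc (r*r) • c = (r • c) * (r • c) := by
            rw [smul_mul_assoc, mul_smul_comm, hc.1.idem, smul_smul]
        _ = d * d := by rw [← hd']
        _ = d := hd.1.idem
        _ = r • c := hd'
    have hrr : r * r = r := by
      have h0 : (r*r - r) • c = 0 := by linear_combination (norm := module) hh
      rcases smul_eq_zero.mp h0 with h' | h'
      · exact sub_eq_zero.mp h'
      · exact absurd h' hc.2.1
    have hr1 : r = 1 := by
      have := mul_right_cancel₀ hr0 (by rw [one_mul]; exact hrr : r * r = 1 * r)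
      exact this
    apply hne
    rw [hd', hr1, one_smul]

lemma lemC {c d : A} (hc : IsPrimPCAxis F (-1:F) c) (hd : IsPrimPCAxis F (-1:F) d)
    (hne : c ≠ d) (z : A) :
    Phi F c d z = Phi F d d z ∧ Phi F c c z = Phi F d c z := by
  obtain ⟨haxc, hc0, hspanc⟩ := hc
  obtain ⟨haxd, hd0, hspand⟩ := hd
  have star : ∀ w : A, Phi F c c d • w + Phi F c d w • c + Phi F c w c • d
      = Phi F d d c • w + Phi F d c w • d + Phi F d w d • c := by
    intro w
    have hcz := lemA h2 h3 haxc hc0 hspanc d w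
    have hdz := lemA h2 h3 haxd hd0 hspand c w
    have lhs_eq : (c*d)*w + (d*w)*c + (w*c)*d = (d*c)*w + (c*w)*d + (w*d)*c := by
      rw [mul_comm d c, mul_comm c w, mul_comm w d]
      abel
    rw [← hcz, lhs_eq, hdz]
  have hPcc : Phi F c c c = 1 := Phi_cc h2 h3 haxc hc0 hspanc
  have hbase : Phi F d c c = 1 ∧ Phi F c c d = Phi F d c d := by
    have h0 := star c
    rw [Phi_comm h2 h3 haxc hc0 hspanc d c, hPcc,
      Phi_comm h2 h3 haxd hd0 hspand d c] at h0
    have key : (2*Phi F c c d - 2*Phi F d c d) • c + (1 - Phi F d c c) • d = 0 := by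
      linear_combination (norm := module) h0
    obtain ⟨e1, e2⟩ := axes_indep h2 h3 ⟨haxc, hc0, hspanc⟩ ⟨haxd, hd0, hspand⟩ hne key
    refine ⟨(sub_eq_zero.mp e2).symm, ?_⟩
    have h' : (2:F) * (Phi F c c d - Phi F d c d) = 0 := by linear_combination e1
    rcases mul_eq_zero.mp h' with h'' | h''
    · exact absurd h'' h2
    · exact sub_eq_zero.mp h''
  have h0 := star z
  rw [Phi_comm h2 h3 haxc hc0 hspanc z c, Phi_comm h2 h3 haxd hd0 hspand z d,
    Phi_comm h2 h3 haxd hd0 hspand d c] at h0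
  have hz : Phi F c c d • z = Phi F d c d • z := by rw [hbase.2]
  have key : (Phi F c d z - Phi F d d z) • c + (Phi F c c z - Phi F d c z) • d = 0 := by
    linear_combination (norm := module) h0 - hz
  obtain ⟨e1, e2⟩ := axes_indep h2 h3 ⟨haxc, hc0, hspanc⟩ ⟨haxd, hd0, hspand⟩ hne key
  exact ⟨sub_eq_zero.mp e1, sub_eq_zero.mp e2⟩

lemma pairAgree {c e : A} (hc : IsPrimPCAxis F (-1:F) c) (he : IsPrimPCAxis F (-1:F) e)
    (z : A) : Phi F c e z = Phi F e e z := by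
  by_cases hne : c = e
  · subst hne; rfl
  · exact (lemC h2 h3 hc he hne z).1

lemma formAgree {a c : A} (ha : IsPrimPCAxis F (-1:F) a) (hc : IsPrimPCAxis F (-1:F) c)
    (hA : IsPrimPCAxialAlgebra F A (-1:F)) (y z : A) : Phi F a y z = Phi F c y z := by
  have htop := spanY_eq_top h2 h3 hA
  have hy : y ∈ span F {x : A | IsPrimPCAxis F (-1:F) x} := by rw [htop]; trivial
  induction hy using span_induction with
  | mem e heY =>
    calc Phi F a e z = Phi F e e z := pairAgree h2 h3 ha heY z
      _ = Phi F c e z := (pairAgree h2 h3 hc heY z).symm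
  | zero =>
    rw [Phi_zero_left h2 h3 ha.1 ha.2.1 ha.2.2, Phi_zero_left h2 h3 hc.1 hc.2.1 hc.2.2]
  | add y₁ y₂ hy₁ hy₂ ih1 ih2 =>
    rw [Phi_add_left h2 h3 ha.1 ha.2.1 ha.2.2, Phi_add_left h2 h3 hc.1 hc.2.1 hc.2.2,
      ih1, ih2]
  | smul t y₁ hy₁ ih =>
    rw [Phi_smul_left h2 h3 ha.1 ha.2.1 ha.2.2, Phi_smul_left h2 h3 hc.1 hc.2.1 hc.2.2, ih]

lemma master {a : A} (ha : IsPrimPCAxis F (-1:F) a) (hA : IsPrimPCAxialAlgebra F A (-1:F))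
    (x y z : A) :
    (x*y)*z + (y*z)*x + (z*x)*y = Phi F a x y • z + Phi F a y z • x + Phi F a z x • y := by
  have htop := spanY_eq_top h2 h3 hA
  have hx : x ∈ span F {x : A | IsPrimPCAxis F (-1:F) x} := by rw [htop]; trivial
  induction hx using span_induction with
  | mem c hcY =>
    have h0 := lemA h2 h3 hcY.1 hcY.2.1 hcY.2.2 y z
    rw [formAgree h2 h3 ha hcY hA c y, formAgree h2 h3 ha hcY hA y z,
      formAgree h2 h3 ha hcY hA z c]
    exact h0
  | zero =>
    rw [Phi_comm h2 h3 ha.1 ha.2.1 ha.2.2 z 0]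
    simp [Phi_zero_left h2 h3 ha.1 ha.2.1 ha.2.2]
  | add x₁ x₂ hx₁ hx₂ ih1 ih2 =>
    have ePhi1 : Phi F a (x₁ + x₂) y = Phi F a x₁ y + Phi F a x₂ y :=
      Phi_add_left h2 h3 ha.1 ha.2.1 ha.2.2 x₁ x₂ y
    have ePhi2 : Phi F a z (x₁ + x₂) = Phi F a z x₁ + Phi F a z x₂ :=
      Phi_add_right h2 h3 ha.1 ha.2.1 ha.2.2 z x₁ x₂
    simp only [add_mul, mul_add, ePhi1, ePhi2, add_smul, smul_add]
    linear_combination (norm := module) ih1 + ih2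
  | smul t x₁ hx₁ ih =>
    have ePhi1 : Phi F a (t • x₁) y = t * Phi F a x₁ y :=
      Phi_smul_left h2 h3 ha.1 ha.2.1 ha.2.2 t x₁ y
    have ePhi2 : Phi F a z (t • x₁) = t * Phi F a z x₁ :=
      Phi_smul_right h2 h3 ha.1 ha.2.1 ha.2.2 t z x₁
    simp only [smul_mul_assoc, mul_smul_comm, ePhi1, ePhi2, mul_smul]
    linear_combination (norm := module) t • ih

end LemC


/-- a primitive `PC(-1)`-axial algebra over a field of characteristic `≠ 2, 3`
is a pseudo-composition algebra. -/
theorem stmt0 (h2 : (2 : F) ≠ 0) (h3 : (3 : F) ≠ 0)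
    (hA : IsPrimPCAxialAlgebra F A (-1 : F)) :
    ∃ φ : A →ₗ[F] A →ₗ[F] F, φ ≠ 0 ∧ (∀ x y : A, φ x y = φ y x) ∧
      ∀ x : A, (x * x) * x = φ x x • x := by
  obtain ⟨X, hXne, hXprim, hXtop⟩ := id hA
  obtain ⟨a, haX⟩ := hXne
  have ha : IsPrimPCAxis F (-1:F) a := hXprim a haX
  refine ⟨LinearMap.mk₂ F (Phi F a) ?_ ?_ ?_ ?_, ?_, ?_, ?_⟩
  · exact fun m₁ m₂ n => Phi_add_left h2 h3 ha.1 ha.2.1 ha.2.2 m₁ m₂ n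
  · exact fun t m n => by
      rw [Phi_smul_left h2 h3 ha.1 ha.2.1 ha.2.2, smul_eq_mul]
  · exact fun m n₁ n₂ => Phi_add_right h2 h3 ha.1 ha.2.1 ha.2.2 m n₁ n₂
  · exact fun t m n => by
      rw [Phi_smul_right h2 h3 ha.1 ha.2.1 ha.2.2, smul_eq_mul]
  · intro h
    have h1 : Phi F a a a = 0 := by
      have := DFunLike.congr_fun (DFunLike.congr_fun h a) a
      simpa using this
    rw [Phi_cc h2 h3 ha.1 ha.2.1 ha.2.2] at h1
    exact one_ne_zero h1
  · intro x y
    exact Phi_comm h2 h3 ha.1 ha.2.1 ha.2.2 x y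
  · intro x
    have hm := master h2 h3 ha hA x x x
    have hkey : (3:F) • ((x*x)*x - Phi F a x x • x) = 0 := by
      linear_combination (norm := module) hm
    rcases smul_eq_zero.mp hkey with h' | h'
    · exact absurd h' h3
    · exact sub_eq_zero.mp h'
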